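/- For all b > 0 and real s > 0, ∫₀^∞ e^{x - b/x} x^{s - 3/2} Γ(1-s, x) dx = 2√π ∫₀^∞ (1 + t²)^{-s} e^{-2√b t} dt, where Γ(p, x) is the upper incomplete Gamma function. -/

import Mathlib

open MeasureTheory Real Set

/-- Upper incomplete Gamma function `Γ(p, x) = ∫_x^∞ u^(p-1) e^(-u) du`. -/
noncomputable def uGamma (p x : ℝ) : ℝ := ∫ u in Set.Ioi x, u ^ (p - 1) * Real.exp (-u)

lemma integral_comp_div_Ioi (g : ℝ → ℝ) {c : ℝ} (hc : 0 < c) :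
    ∫ y in Ioi (0:ℝ), (c / y ^ 2) * g (c / y) = ∫ y in Ioi (0:ℝ), g y := by
  have h1 := integral_comp_rpow_Ioi (fun u => g (c * u)) (p := -1) (by norm_num)
  have h2 : (∫ y in Ioi (0:ℝ), g (c * y)) = c⁻¹ • ∫ y in Ioi (c * 0), g y :=
    integral_comp_mul_left_Ioi g 0 hc
  rw [mul_zero] at h2
  rw [h2] at h1
  have h3 : ∫ x in Ioi (0:ℝ), (|(-1:ℝ)| * x ^ ((-1:ℝ) - 1)) • g (c * x ^ (-1:ℝ))
      = ∫ y in Ioi (0:ℝ), c⁻¹ * ((c / y ^ 2) * g (c / y)) := by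
    refine setIntegral_congr_fun measurableSet_Ioi (fun x hx => ?_)
    have hx0 : (0:ℝ) < x := hx
    rw [Real.rpow_neg_one]
    have : ((-1:ℝ) - 1) = (-2 : ℝ) := by norm_num
    rw [this]
    have : x ^ ((-2:ℝ)) = (x ^ 2)⁻¹ := by
      rw [show ((-2:ℝ)) = -(2:ℕ) by push_cast; ring, Real.rpow_neg hx0.le, Real.rpow_natCast]
    rw [this]
    have : c * x⁻¹ = c / x := by field_simp
    rw [this]
    rw [smul_eq_mul]
    field_simp
    simp
  rw [h3, integral_const_mul] at h1
  have := mul_left_cancel₀ (inv_ne_zero hc.ne') h1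
  rw [this]


lemma glasser_aux {α β : ℝ} (hα : 0 < α) (hβ : 0 < β) :
    IntegrableOn (fun y => Real.exp (-(α * y - β / y) ^ 2)) (Ioi (0:ℝ)) ∧
    ∫ y in Ioi (0:ℝ), Real.exp (-(α * y - β / y) ^ 2) = Real.sqrt π / (2 * α) := by
  set f : ℝ → ℝ := fun y => α * y - β / y with hf
  set f' : ℝ → ℝ := fun y => α + β / y ^ 2 with hf'
  have hderiv : ∀ y ∈ Ioi (0:ℝ), HasDerivWithinAt f (f' y) (Ioi 0) y := by
    intro y hy
    have hy0 : (y:ℝ) ≠ 0 := (mem_Ioi.mp hy).ne'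
    have h : HasDerivAt f (α * 1 - β * (-(y^2)⁻¹)) y := by
      have h0 := ((hasDerivAt_id y).const_mul α).sub ((hasDerivAt_inv hy0).const_mul β)
      exact h0.congr_of_eventuallyEq
        (Filter.Eventually.of_forall fun z => by simp [hf, div_eq_mul_inv])
    have : α * 1 - β * (-(y^2)⁻¹) = f' y := by simp only [hf']; ring
    exact (this ▸ h).hasDerivWithinAt
  have hmono : StrictMonoOn f (Ioi 0) := by
    intro x hx y hy hxy
    have hx0 : (0:ℝ) < x := hx
    have hy0 : (0:ℝ) < y := hy
    have h1 : β / y < β / x := by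
      apply div_lt_div_of_pos_left hβ hx0 hxy
    have h2 : α * x < α * y := by nlinarith
    simp only [hf]; linarith
  have hinj : InjOn f (Ioi 0) := hmono.injOn
  have himg : f '' Ioi 0 = univ := by
    ext u
    simp only [mem_image, mem_univ, iff_true]
    set r := Real.sqrt (u ^ 2 + 4 * α * β) with hr
    have hr2 : r ^ 2 = u ^ 2 + 4 * α * β := by
      rw [hr, sq_sqrt]; nlinarith
    have hru : -u < r := by
      nlinarith [Real.sqrt_nonneg (u ^ 2 + 4 * α * β), abs_nonneg u, sq_abs u,
        Real.sqrt_le_sqrt (le_refl (u^2 + 4*α*β)), hr2]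
    refine ⟨(u + r) / (2 * α), ?_, ?_⟩
    · have h0 : 0 < u + r := by linarith
      exact mem_Ioi.mpr (div_pos h0 (by positivity))
    · have h0 : 0 < u + r := by linarith
      simp only [hf]
      field_simp
      nlinarith [hr2]
  have hkey := integral_image_eq_integral_abs_deriv_smul measurableSet_Ioi hderiv hinj
    (fun u => Real.exp (-u ^ 2))
  rw [himg, Measure.restrict_univ] at hkey
  have hgauss : (∫ u : ℝ, Real.exp (-u ^ 2)) = Real.sqrt π := by
    simpa using integral_gaussian 1
  -- integrability of the substituted integrand
  have hKint : IntegrableOn (fun y => |f' y| • Real.exp (-(f y) ^ 2)) (Ioi 0) := by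
    refine (integrableOn_image_iff_integrableOn_abs_deriv_smul measurableSet_Ioi hderiv hinj
      (fun u => Real.exp (-u ^ 2))).mp ?_
    rw [himg, integrableOn_univ]
    simpa using integrable_exp_neg_mul_sq one_pos
  have habs : ∀ y ∈ Ioi (0:ℝ), |f' y| • Real.exp (-(f y) ^ 2)
      = (α + β / y ^ 2) * Real.exp (-(f y) ^ 2) := by
    intro y hy
    have hy0 : (0:ℝ) < y := hy
    have : 0 < f' y := by
      simp only [hf']
      exact add_pos hα (div_pos hβ (pow_pos hy0 2))
    rw [smul_eq_mul, abs_of_pos this]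
  have hcontf : ContinuousOn (fun y => Real.exp (-(f y) ^ 2)) (Ioi (0:ℝ)) := by
    apply Real.continuous_exp.comp_continuousOn
    apply ContinuousOn.neg
    apply ContinuousOn.pow
    exact (continuousOn_const.mul continuousOn_id).sub
      (continuousOn_const.div continuousOn_id (fun y hy => (mem_Ioi.mp hy).ne'))
  have hKint' : IntegrableOn (fun y => (α + β / y ^ 2) * Real.exp (-(f y) ^ 2)) (Ioi 0) := by
    exact hKint.congr_fun habs measurableSet_Ioi
  have hJint : IntegrableOn (fun y => Real.exp (-(f y) ^ 2)) (Ioi 0) := by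
    refine Integrable.mono' (hKint'.const_mul (1/α)) (hcontf.aestronglyMeasurable measurableSet_Ioi) ?_
    filter_upwards [ae_restrict_mem measurableSet_Ioi] with y hy
    have hy0 : (0:ℝ) < y := hy
    have h1 : (1:ℝ) ≤ (1/α) * (α + β / y ^ 2) := by
      rw [one_div, inv_mul_eq_div, le_div_iff₀ hα]
      have : 0 ≤ β / y ^ 2 := le_of_lt (div_pos hβ (pow_pos hy0 2))
      linarith
    have h2 : 0 ≤ Real.exp (-(f y) ^ 2) := (Real.exp_pos _).le
    rw [Real.norm_eq_abs, abs_of_pos (Real.exp_pos _)]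
    calc Real.exp (-(f y) ^ 2) = 1 * Real.exp (-(f y) ^ 2) := (one_mul _).symm
      _ ≤ (1/α) * (α + β / y ^ 2) * Real.exp (-(f y) ^ 2) := by
          apply mul_le_mul_of_nonneg_right h1 h2
      _ = (1/α) * ((α + β / y ^ 2) * Real.exp (-(f y) ^ 2)) := by ring
  -- the reflection identity
  have hc : (0:ℝ) < β / α := div_pos hβ hα
  have hrefl := integral_comp_div_Ioi (fun u => α * Real.exp (-(f u) ^ 2)) hc
  have hrefl' : ∫ y in Ioi (0:ℝ), (β / y ^ 2) * Real.exp (-(f y) ^ 2)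
      = α * ∫ y in Ioi (0:ℝ), Real.exp (-(f y) ^ 2) := by
    rw [← integral_const_mul, ← hrefl]
    refine setIntegral_congr_fun measurableSet_Ioi (fun y hy => ?_)
    have hy0 : (0:ℝ) < y := hy
    have hfy : f (β / α / y) = -(f y) := by
      simp only [hf]
      field_simp
      ring
    show β / y ^ 2 * Real.exp (-(f y) ^ 2)
        = β / α / y ^ 2 * (α * Real.exp (-(f (β / α / y)) ^ 2))
    rw [hfy]
    rw [show (-(-(f y)) ^ 2 : ℝ) = -(f y) ^ 2 by ring]
    field_simp
  -- split the key integral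
  have hK : ∫ y in Ioi (0:ℝ), (α + β / y ^ 2) * Real.exp (-(f y) ^ 2) = Real.sqrt π := by
    rw [← hgauss, hkey]
    exact setIntegral_congr_fun measurableSet_Ioi (fun y hy => (habs y hy).symm)
  have hBint : IntegrableOn (fun y => (β / y ^ 2) * Real.exp (-(f y) ^ 2)) (Ioi 0) := by
    have := hKint'.sub (hJint.const_mul α)
    refine this.congr (Filter.Eventually.of_forall (fun y => ?_))
    simp only [Pi.sub_apply]
    ring
  have hsplit : ∫ y in Ioi (0:ℝ), (α + β / y ^ 2) * Real.exp (-(f y) ^ 2)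
      = α * (∫ y in Ioi (0:ℝ), Real.exp (-(f y) ^ 2))
        + ∫ y in Ioi (0:ℝ), (β / y ^ 2) * Real.exp (-(f y) ^ 2) := by
    rw [← integral_const_mul, ← integral_add (hJint.const_mul α) hBint]
    congr 1
    funext y
    ring
  refine ⟨hJint, ?_⟩
  rw [hK, hrefl'] at hsplit
  have : Real.sqrt π = 2 * α * ∫ y in Ioi (0:ℝ), Real.exp (-(f y) ^ 2) := by linarith
  rw [this]
  exact (mul_div_cancel_left₀ _ (by positivity)).symm


lemma glasser {α β : ℝ} (hα : 0 < α) (hβ : 0 < β) :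
    ∫ y in Ioi (0:ℝ), Real.exp (-(α * y - β / y) ^ 2) = Real.sqrt π / (2 * α) :=
  (glasser_aux hα hβ).2

lemma glasser_integrable {α β : ℝ} (hα : 0 < α) (hβ : 0 < β) :
    IntegrableOn (fun y => Real.exp (-(α * y - β / y) ^ 2)) (Ioi (0:ℝ)) :=
  (glasser_aux hα hβ).1

lemma complete_sq {a b : ℝ} (ha : 0 < a) (hb : 0 < b) : ∀ y ∈ Ioi (0:ℝ),
    Real.exp (-(a * y ^ 2 + b / y ^ 2))
      = Real.exp (-2 * Real.sqrt (a * b)) * Real.exp (-(Real.sqrt a * y - Real.sqrt b / y) ^ 2) := by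
  intro y hy
  have hy0 : (0:ℝ) < y := hy
  rw [← Real.exp_add]
  congr 1
  have h1 : Real.sqrt a ^ 2 = a := Real.sq_sqrt ha.le
  have h2 : Real.sqrt b ^ 2 = b := Real.sq_sqrt hb.le
  have h3 : Real.sqrt a * Real.sqrt b = Real.sqrt (a * b) := (Real.sqrt_mul ha.le b).symm
  have expand : (Real.sqrt a * y - Real.sqrt b / y) ^ 2
      = Real.sqrt a ^ 2 * y ^ 2 - 2 * (Real.sqrt a * Real.sqrt b) + Real.sqrt b ^ 2 / y ^ 2 := by
    field_simp
    ring
  rw [expand, h1, h2, h3]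
  ring

lemma lemmaA {a b : ℝ} (ha : 0 < a) (hb : 0 < b) :
    ∫ y in Ioi (0:ℝ), Real.exp (-(a * y ^ 2 + b / y ^ 2))
      = Real.sqrt π / (2 * Real.sqrt a) * Real.exp (-2 * Real.sqrt (a * b)) := by
  have hsa : 0 < Real.sqrt a := Real.sqrt_pos.mpr ha
  have hsb : 0 < Real.sqrt b := Real.sqrt_pos.mpr hb
  rw [setIntegral_congr_fun measurableSet_Ioi (complete_sq ha hb), integral_const_mul,
    glasser hsa hsb]
  ring

lemma lemmaA_integrable {a b : ℝ} (ha : 0 < a) (hb : 0 < b) :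
    IntegrableOn (fun y : ℝ => Real.exp (-(a * y ^ 2 + b / y ^ 2))) (Ioi 0) := by
  have hsa : 0 < Real.sqrt a := Real.sqrt_pos.mpr ha
  have hsb : 0 < Real.sqrt b := Real.sqrt_pos.mpr hb
  have h := ((glasser_integrable hsa hsb).const_mul (Real.exp (-2 * Real.sqrt (a * b))))
  exact IntegrableOn.congr_fun h (fun y hy => ((complete_sq ha hb) y hy).symm) measurableSet_Ioi

lemma lemmaB {a b : ℝ} (ha : 0 < a) (hb : 0 < b) :
    ∫ x in Ioi (0:ℝ), x ^ (-(1:ℝ)/2) * Real.exp (-(a * x + b / x))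
      = Real.sqrt π / Real.sqrt a * Real.exp (-2 * Real.sqrt (a * b)) := by
  have hsa : 0 < Real.sqrt a := Real.sqrt_pos.mpr ha
  have h := integral_comp_rpow_Ioi_of_pos (p := 2)
    (g := fun x => x ^ (-(1:ℝ)/2) * Real.exp (-(a * x + b / x))) two_pos
  rw [← h]
  have heq : ∀ y ∈ Ioi (0:ℝ), ((2:ℝ) * y ^ ((2:ℝ) - 1)) • ((y ^ (2:ℝ)) ^ (-(1:ℝ)/2) *
      Real.exp (-(a * y ^ (2:ℝ) + b / y ^ (2:ℝ))))
      = 2 * Real.exp (-(a * y ^ 2 + b / y ^ 2)) := by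
    intro y hy
    have hy0 : (0:ℝ) < y := hy
    have hr1 : y ^ ((2:ℝ) - 1) = y := by norm_num
    have hrho : (y ^ (2:ℝ)) ^ (-(1:ℝ)/2) = y⁻¹ := by
      rw [← Real.rpow_mul hy0.le, show (2:ℝ) * (-1/2) = -1 by norm_num, Real.rpow_neg_one]
    have hr2 : y ^ (2:ℝ) = y ^ 2 := by
      rw [← Real.rpow_natCast y 2]; norm_num
    rw [hr1, hrho, hr2, smul_eq_mul]
    field_simp
  rw [setIntegral_congr_fun measurableSet_Ioi heq, integral_const_mul, lemmaA ha hb]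
  field_simp


lemma texp_int {x : ℝ} (hx : 0 < x) :
    ∫ t in Ioi (0:ℝ), 2 * t * Real.exp (-(x * t ^ 2)) = 1 / x := by
  have h := integral_comp_rpow_Ioi_of_pos (p := 2)
    (g := fun u => Real.exp (-(x * u))) two_pos
  have heq : ∀ t ∈ Ioi (0:ℝ), ((2:ℝ) * t ^ ((2:ℝ) - 1)) • Real.exp (-(x * t ^ (2:ℝ)))
      = 2 * t * Real.exp (-(x * t ^ 2)) := by
    intro t ht
    have ht0 : (0:ℝ) < t := ht
    have hr1 : t ^ ((2:ℝ) - 1) = t := by norm_num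
    have hr2 : t ^ (2:ℝ) = t ^ 2 := by rw [← Real.rpow_natCast t 2]; norm_num
    rw [hr1, hr2, smul_eq_mul]
  rw [← setIntegral_congr_fun measurableSet_Ioi heq, h]
  have h2 : ∀ u : ℝ, Real.exp (-(x * u)) = Real.exp (-(x * u)) := fun _ => rfl
  have h3 := integral_comp_mul_left_Ioi (fun u => Real.exp (-u)) 0 hx
  rw [mul_zero] at h3
  calc ∫ u in Ioi (0:ℝ), Real.exp (-(x * u)) = x⁻¹ • ∫ u in Ioi (0:ℝ), Real.exp (-u) := h3
    _ = 1 / x := by rw [integral_exp_neg_Ioi_zero, smul_eq_mul, mul_one, one_div]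

lemma uGamma_eq {s x : ℝ} (hx : 0 < x) :
    uGamma (1 - s) x
      = x ^ (1 - s) * Real.exp (-x) * ∫ w in Ioi (0:ℝ), (1 + w) ^ (-s) * Real.exp (-(x * w)) := by
  have hderiv : ∀ w ∈ Ioi (0:ℝ), HasDerivWithinAt (fun w : ℝ => x + x * w) x (Ioi 0) w := by
    intro w hw
    simpa using ((hasDerivAt_id w).const_mul x).hasDerivWithinAt
  have hinj : InjOn (fun w : ℝ => x + x * w) (Ioi 0) := by
    intro u hu v hv huv
    simp only at huv
    have := mul_left_cancel₀ hx.ne' (by linarith : x * u = x * v)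
    exact this
  have himg : (fun w : ℝ => x + x * w) '' Ioi 0 = Ioi x := by
    ext u
    simp only [mem_image, mem_Ioi]
    constructor
    · rintro ⟨w, hw, rfl⟩; nlinarith
    · intro hu
      exact ⟨(u - x) / x, div_pos (by linarith) hx, by field_simp; ring⟩
  have hkey := integral_image_eq_integral_abs_deriv_smul measurableSet_Ioi hderiv hinj
    (fun u => u ^ ((1 - s) - 1) * Real.exp (-u))
  rw [himg] at hkey
  rw [uGamma, hkey]
  rw [← integral_const_mul]
  refine setIntegral_congr_fun measurableSet_Ioi (fun w hw => ?_)
  have hw0 : (0:ℝ) < w := hw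
  have h1w : (0:ℝ) < 1 + w := by linarith
  have hexp : (1 - s) - 1 = -s := by ring
  have hxw : x + x * w = x * (1 + w) := by ring
  rw [smul_eq_mul, abs_of_pos hx, hexp, hxw, Real.mul_rpow hx.le h1w.le]
  rw [show -(x * (1 + w)) = -x + -(x * w) by ring, Real.exp_add]
  rw [show x ^ (1 - s) = x * x ^ (-s) by
    rw [show (1 - s) = 1 + (-s) by ring, Real.rpow_add hx, Real.rpow_one]]
  ring

lemma tsub_eq {s x : ℝ} (hx : 0 < x) :
    ∫ w in Ioi (0:ℝ), (1 + w) ^ (-s) * Real.exp (-(x * w))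
      = ∫ t in Ioi (0:ℝ), 2 * t * ((1 + t ^ 2) ^ (-s) * Real.exp (-(x * t ^ 2))) := by
  have h := integral_comp_rpow_Ioi_of_pos (p := 2)
    (g := fun w => (1 + w) ^ (-s) * Real.exp (-(x * w))) two_pos
  rw [← h]
  refine (setIntegral_congr_fun measurableSet_Ioi (fun t ht => ?_)).symm
  have ht0 : (0:ℝ) < t := ht
  have hr1 : t ^ ((2:ℝ) - 1) = t := by norm_num
  have hr2 : t ^ (2:ℝ) = t ^ 2 := by rw [← Real.rpow_natCast t 2]; norm_num
  rw [hr1, hr2, smul_eq_mul]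


lemma phi_int {b : ℝ} (hb : 0 < b) :
    IntegrableOn (fun x : ℝ => Real.exp (-(b/x)) * x ^ (-(3:ℝ)/2)) (Ioi 0) := by
  have hcont : ContinuousOn (fun x : ℝ => Real.exp (-(b/x)) * x ^ (-(3:ℝ)/2)) {x : ℝ | x ≠ 0} := by
    apply ContinuousOn.mul
    · exact Real.continuous_exp.comp_continuousOn
        ((continuousOn_const.div continuousOn_id (fun x hx => hx)).neg)
    · exact ContinuousOn.rpow_const continuousOn_id (fun x hx => Or.inl hx)
  have h1 : IntegrableOn (fun x : ℝ => Real.exp (-(b/x)) * x ^ (-(3:ℝ)/2)) (Ioc 0 1) := by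
    refine Integrable.mono' (g := fun _ => 4 / b ^ 2)
      ((integrableOn_const_iff (C := 4 / b ^ 2)).mpr (Or.inr measure_Ioc_lt_top))
      (hcont.mono (fun x hx => ne_of_gt hx.1) |>.aestronglyMeasurable measurableSet_Ioc) ?_
    filter_upwards [ae_restrict_mem measurableSet_Ioc] with x hx
    obtain ⟨hx0, hx1⟩ := hx
    have hbx : 0 < b / x := div_pos hb hx0
    have hexp : Real.exp (-(b/x)) ≤ 4 * x ^ 2 / b ^ 2 := by
      have hc := Real.add_one_le_exp (b / (2 * x))
      have hcc : 0 < b / (2 * x) := div_pos hb (by linarith)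
      have hsq : (b / (2 * x)) ^ 2 ≤ Real.exp (b / (2 * x)) ^ 2 := by
        apply pow_le_pow_left₀ hcc.le (by linarith) 2
      have hx2 : Real.exp (b / (2 * x)) ^ 2 = Real.exp (b / x) := by
        rw [sq, ← Real.exp_add]
        congr 1
        field_simp
        ring
      rw [hx2] at hsq
      rw [Real.exp_neg, inv_le_iff_one_le_mul₀ (Real.exp_pos _)]
      rw [← sub_nonneg] at hsq
      have hb2 : (b / (2 * x)) ^ 2 = b ^ 2 / (4 * x ^ 2) := by
        field_simp; ring
      rw [hb2] at hsq
      have h4x : (0:ℝ) < 4 * x ^ 2 / b ^ 2 := by positivity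
      rw [← sub_nonneg]
      have : 4 * x ^ 2 / b ^ 2 * Real.exp (b/x) - 1
          = (Real.exp (b/x) - b ^ 2 / (4 * x ^ 2)) * (4 * x ^ 2 / b ^ 2) := by
        field_simp
      rw [this]
      exact mul_nonneg hsq h4x.le
    have hrpow : x ^ (-(3:ℝ)/2) = x ^ ((1:ℝ)/2) / x ^ 2 := by
      rw [eq_div_iff (by positivity)]
      rw [← Real.rpow_natCast x 2, ← Real.rpow_add hx0]
      norm_num
    rw [Real.norm_eq_abs, abs_of_nonneg (by positivity)]
    calc Real.exp (-(b/x)) * x ^ (-(3:ℝ)/2)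
        ≤ (4 * x ^ 2 / b ^ 2) * x ^ (-(3:ℝ)/2) := by
          apply mul_le_mul_of_nonneg_right hexp (by positivity)
      _ = (4 / b ^ 2) * x ^ ((1:ℝ)/2) := by rw [hrpow]; field_simp
      _ ≤ (4 / b ^ 2) * 1 := by
          apply mul_le_mul_of_nonneg_left _ (by positivity)
          exact Real.rpow_le_one hx0.le hx1 (by norm_num)
      _ = 4 / b ^ 2 := mul_one _
  have h2 : IntegrableOn (fun x : ℝ => Real.exp (-(b/x)) * x ^ (-(3:ℝ)/2)) (Ioi 1) := by
    refine Integrable.mono' (g := fun x => x ^ (-(3:ℝ)/2))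
      (integrableOn_Ioi_rpow_of_lt (by norm_num) one_pos)
      (hcont.mono (fun x hx => ne_of_gt (lt_trans one_pos hx)) |>.aestronglyMeasurable
        measurableSet_Ioi) ?_
    filter_upwards [ae_restrict_mem measurableSet_Ioi] with x hx
    have hx1 : (1:ℝ) < x := hx
    have hx0 : (0:ℝ) < x := lt_trans one_pos hx1
    rw [Real.norm_eq_abs, abs_of_nonneg (by positivity)]
    calc Real.exp (-(b/x)) * x ^ (-(3:ℝ)/2) ≤ 1 * x ^ (-(3:ℝ)/2) := by
          apply mul_le_mul_of_nonneg_right _ (by positivity)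
          exact Real.exp_le_one_iff.mpr (neg_nonpos.mpr (by positivity))
      _ = x ^ (-(3:ℝ)/2) := one_mul _
  have := h1.union h2
  rwa [Ioc_union_Ioi_eq_Ioi zero_le_one] at this


theorem integral_uGamma_eq_integral (b s : ℝ) (hb : 0 < b) (hs : 0 < s) :
    ∫ x in Set.Ioi (0:ℝ), Real.exp (x - b / x) * x ^ (s - 3 / 2) * uGamma (1 - s) x
      = 2 * Real.sqrt Real.pi *
        ∫ t in Set.Ioi (0:ℝ), (1 + t ^ 2) ^ (-s) * Real.exp (-2 * Real.sqrt b * t) := by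
  set H : ℝ → ℝ → ℝ := fun x t => Real.exp (-(b/x)) * x ^ (-(1:ℝ)/2) *
    (2 * t * ((1 + t ^ 2) ^ (-s) * Real.exp (-(x * t ^ 2)))) with hH
  -- Step 1: rewrite LHS as iterated integral
  have hstep1 : ∫ x in Set.Ioi (0:ℝ), Real.exp (x - b / x) * x ^ (s - 3 / 2) * uGamma (1 - s) x
      = ∫ x in Ioi (0:ℝ), ∫ t in Ioi (0:ℝ), H x t := by
    refine setIntegral_congr_fun measurableSet_Ioi (fun x hx => ?_)
    have hx0 : (0:ℝ) < x := hx
    rw [uGamma_eq hx0, tsub_eq hx0]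
    simp only [hH]
    rw [integral_const_mul]
    have hc : Real.exp (x - b/x) * x ^ (s - 3/2) * (x ^ ((1:ℝ) - s) * Real.exp (-x))
        = Real.exp (-(b/x)) * x ^ (-(1:ℝ)/2) := by
      rw [show Real.exp (x - b/x) * x ^ (s - 3/2) * (x ^ ((1:ℝ) - s) * Real.exp (-x))
          = (Real.exp (x - b/x) * Real.exp (-x)) * (x ^ (s - 3/2) * x ^ ((1:ℝ) - s)) by ring,
        ← Real.exp_add, ← Real.rpow_add hx0]
      congr 1
      · congr 1; ring
      · congr 1; ring
    calc Real.exp (x - b/x) * x ^ (s - 3/2)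
          * (x ^ ((1:ℝ) - s) * Real.exp (-x) * ∫ t in Ioi (0:ℝ),
              2 * t * ((1 + t ^ 2) ^ (-s) * Real.exp (-(x * t ^ 2))))
        = (Real.exp (x - b/x) * x ^ (s - 3/2) * (x ^ ((1:ℝ) - s) * Real.exp (-x)))
            * ∫ t in Ioi (0:ℝ), 2 * t * ((1 + t ^ 2) ^ (-s) * Real.exp (-(x * t ^ 2))) := by ring
      _ = _ := by rw [hc]
  -- continuity on the open quadrant
  have hcont : ContinuousOn (Function.uncurry H) (Ioi (0:ℝ) ×ˢ Ioi (0:ℝ)) := by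
    have hne : ∀ p : ℝ × ℝ, p ∈ Ioi (0:ℝ) ×ˢ Ioi (0:ℝ) → p.1 ≠ 0 :=
      fun p hp => ne_of_gt hp.1
    apply ContinuousOn.mul
    · apply ContinuousOn.mul
      · exact Real.continuous_exp.comp_continuousOn
          ((continuousOn_const.div continuousOn_fst hne).neg)
      · exact ContinuousOn.rpow_const continuousOn_fst (fun p hp => Or.inl (hne p hp))
    · apply ContinuousOn.mul
      · exact (continuousOn_const.mul continuousOn_snd)
      · apply ContinuousOn.mul
        · refine ContinuousOn.rpow_const
            (continuousOn_const.add (continuousOn_snd.pow 2)) (fun p hp => Or.inl ?_)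
          have := sq_nonneg p.2
          intro h; nlinarith
        · exact Real.continuous_exp.comp_continuousOn
            ((continuousOn_fst.mul (continuousOn_snd.pow 2)).neg)
  have hmeas : AEStronglyMeasurable (Function.uncurry H)
      ((volume.restrict (Ioi (0:ℝ))).prod (volume.restrict (Ioi (0:ℝ)))) := by
    rw [Measure.prod_restrict]
    exact hcont.aestronglyMeasurable (measurableSet_Ioi.prod measurableSet_Ioi)
  -- slice integrability
  have hbase : ∀ x : ℝ, 0 < x →
      IntegrableOn (fun t => 2 * t * ((1 + t ^ 2) ^ (-s) * Real.exp (-(x * t ^ 2)))) (Ioi 0) := by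
    intro x hx
    have hg : IntegrableOn (fun t : ℝ => 2 * (t * Real.exp (-(x * t ^ 2)))) (Ioi 0) := by
      refine (Integrable.const_mul ?_ 2).integrableOn
      have := integrable_mul_exp_neg_mul_sq hx
      simpa [neg_mul] using this
    refine Integrable.mono' hg ?_ ?_
    · apply Continuous.aestronglyMeasurable
      apply Continuous.mul (by continuity)
      apply Continuous.mul
      · apply Continuous.rpow_const (by continuity)
        intro t; left; have := sq_nonneg t; intro h; nlinarith
      · exact Real.continuous_exp.comp (by continuity)
    · filter_upwards [ae_restrict_mem measurableSet_Ioi] with t ht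
      have ht0 : (0:ℝ) < t := ht
      have h1 : (1 + t ^ 2) ^ (-s) ≤ 1 :=
        Real.rpow_le_one_of_one_le_of_nonpos (by nlinarith [sq_nonneg t]) (by linarith)
      have h2 : (0:ℝ) < (1 + t ^ 2) ^ (-s) := Real.rpow_pos_of_pos (by nlinarith [sq_nonneg t]) _
      rw [Real.norm_eq_abs, abs_of_nonneg (by positivity)]
      have he : (0:ℝ) < Real.exp (-(x * t ^ 2)) := Real.exp_pos _
      calc 2 * t * ((1 + t ^ 2) ^ (-s) * Real.exp (-(x * t ^ 2)))
          ≤ 2 * t * (1 * Real.exp (-(x * t ^ 2))) := by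
            apply mul_le_mul_of_nonneg_left _ (by linarith)
            apply mul_le_mul_of_nonneg_right h1 he.le
        _ = 2 * (t * Real.exp (-(x * t ^ 2))) := by ring
  have hslice : ∀ᵐ x ∂(volume.restrict (Ioi (0:ℝ))),
      Integrable (fun t => H x t) (volume.restrict (Ioi (0:ℝ))) := by
    filter_upwards [ae_restrict_mem measurableSet_Ioi] with x hx
    have hx0 : (0:ℝ) < x := hx
    exact ((hbase x hx0).const_mul (Real.exp (-(b/x)) * x ^ (-(1:ℝ)/2)))
  -- third condition
  have hthird : Integrable (fun x => ∫ t, ‖H x t‖ ∂(volume.restrict (Ioi (0:ℝ))))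
      (volume.restrict (Ioi (0:ℝ))) := by
    refine Integrable.mono' (phi_int hb) (hmeas.norm.integral_prod_right') ?_
    filter_upwards [ae_restrict_mem measurableSet_Ioi] with x hx
    have hx0 : (0:ℝ) < x := hx
    have hCx : (0:ℝ) ≤ Real.exp (-(b/x)) * x ^ (-(1:ℝ)/2) := by positivity
    have hnn : 0 ≤ ∫ t, ‖H x t‖ ∂(volume.restrict (Ioi (0:ℝ))) :=
      integral_nonneg (fun t => norm_nonneg _)
    rw [Real.norm_eq_abs, abs_of_nonneg hnn]
    have hmono : ∫ t, ‖H x t‖ ∂(volume.restrict (Ioi (0:ℝ)))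
        ≤ ∫ t in Ioi (0:ℝ), (Real.exp (-(b/x)) * x ^ (-(1:ℝ)/2)) * (2 * t * Real.exp (-(x * t ^ 2))) := by
      refine integral_mono_ae (((hbase x hx0).const_mul _).norm) ?_ ?_
      · have hg : IntegrableOn (fun t : ℝ => t * Real.exp (-(x * t ^ 2))) (Ioi 0) := by
          have := integrable_mul_exp_neg_mul_sq hx0
          simpa [neg_mul] using this.integrableOn
        have := (hg.const_mul (Real.exp (-(b/x)) * x ^ (-(1:ℝ)/2) * 2))
        refine this.congr (Filter.Eventually.of_forall (fun t => by ring_nf))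
      · filter_upwards [ae_restrict_mem measurableSet_Ioi] with t ht
        have ht0 : (0:ℝ) < t := ht
        have h1 : (1 + t ^ 2) ^ (-s) ≤ 1 :=
          Real.rpow_le_one_of_one_le_of_nonpos (by nlinarith [sq_nonneg t]) (by linarith)
        have h2 : (0:ℝ) < (1 + t ^ 2) ^ (-s) := Real.rpow_pos_of_pos (by nlinarith [sq_nonneg t]) _
        have he : (0:ℝ) < Real.exp (-(x * t ^ 2)) := Real.exp_pos _
        simp only [hH]
        rw [Real.norm_eq_abs, abs_of_nonneg (by positivity)]
        calc Real.exp (-(b/x)) * x ^ (-(1:ℝ)/2) * (2 * t * ((1 + t ^ 2) ^ (-s) * Real.exp (-(x * t ^ 2))))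
            ≤ Real.exp (-(b/x)) * x ^ (-(1:ℝ)/2) * (2 * t * (1 * Real.exp (-(x * t ^ 2)))) := by
              apply mul_le_mul_of_nonneg_left _ hCx
              apply mul_le_mul_of_nonneg_left _ (by linarith)
              apply mul_le_mul_of_nonneg_right h1 he.le
          _ = Real.exp (-(b/x)) * x ^ (-(1:ℝ)/2) * (2 * t * Real.exp (-(x * t ^ 2))) := by ring
    calc ∫ t, ‖H x t‖ ∂(volume.restrict (Ioi (0:ℝ)))
        ≤ ∫ t in Ioi (0:ℝ), (Real.exp (-(b/x)) * x ^ (-(1:ℝ)/2)) * (2 * t * Real.exp (-(x * t ^ 2))) := hmono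
      _ = (Real.exp (-(b/x)) * x ^ (-(1:ℝ)/2)) * (1 / x) := by
          rw [integral_const_mul, texp_int hx0]
      _ = Real.exp (-(b/x)) * x ^ (-(3:ℝ)/2) := by
          rw [show x ^ (-(3:ℝ)/2) = x ^ (-(1:ℝ)/2) * x⁻¹ by
            rw [← Real.rpow_neg_one x, ← Real.rpow_add hx0]; norm_num]
          ring
  have hint : Integrable (Function.uncurry H)
      ((volume.restrict (Ioi (0:ℝ))).prod (volume.restrict (Ioi (0:ℝ)))) :=
    (integrable_prod_iff hmeas).mpr ⟨hslice, hthird⟩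
  have hswap := integral_integral_swap (f := H) hint
  rw [hstep1, hswap]
  -- final evaluation of the inner x-integral
  rw [← integral_const_mul]
  refine setIntegral_congr_fun measurableSet_Ioi (fun t ht => ?_)
  have ht0 : (0:ℝ) < t := ht
  have ht2 : (0:ℝ) < t ^ 2 := by positivity
  have hinner : ∫ x in Ioi (0:ℝ), H x t
      = (2 * t * ((1 + t ^ 2) ^ (-s))) *
        ∫ x in Ioi (0:ℝ), x ^ (-(1:ℝ)/2) * Real.exp (-(t ^ 2 * x + b / x)) := by
    rw [← integral_const_mul]
    refine setIntegral_congr_fun measurableSet_Ioi (fun x hx => ?_)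
    have hx0 : (0:ℝ) < x := hx
    simp only [hH]
    rw [show -(t ^ 2 * x + b / x) = -(b/x) + -(x * t ^ 2) by ring, Real.exp_add]
    ring
  rw [hinner, lemmaB ht2 hb]
  rw [Real.sqrt_sq ht0.le, Real.sqrt_mul (sq_nonneg t) b, Real.sqrt_sq ht0.le]
  rw [show (-2:ℝ) * (t * Real.sqrt b) = -2 * Real.sqrt b * t by ring]
  field_simp
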